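/- arXiv:1712.05439 — 3 statements merged into one kernel-verified Lean document; each statement's English description precedes it below -/
import Mathlib

section
/- The map F_ε is Lipschitz continuous on ℝ^d with Lipschitz constant 1/ε. -/
/-- The Kohn regularised cloaking map `F_ε : ℝ^d → ℝ^d`. -/
noncomputable def kohnMap (d : ℕ) (ε : ℝ) (x : EuclideanSpace ℝ (Fin d)) :
    EuclideanSpace ℝ (Fin d) :=
  if 2 ≤ ‖x‖ then x
  else if ε ≤ ‖x‖ then ((2 - 2 * ε) / (2 - ε) + ‖x‖ / (2 - ε)) • (‖x‖⁻¹ • x)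
  else ε⁻¹ • x

open scoped RealInnerProductSpace

/-- Radial scale factor of the Kohn map. -/
noncomputable def kohnScale (ε r : ℝ) : ℝ :=
  if 2 ≤ r then 1
  else if ε ≤ r then ((2 - 2 * ε) / (2 - ε) + r / (2 - ε)) / r
  else ε⁻¹

/-- Radial profile `g(r) = kohnScale ε r * r` of the Kohn map. -/
noncomputable def kohnG (ε r : ℝ) : ℝ :=
  if 2 ≤ r then r
  else if ε ≤ r then (2 - 2 * ε + r) / (2 - ε)
  else r / ε

lemma kohnScale_mul (ε r : ℝ) (hε0 : 0 < ε) : kohnScale ε r * r = kohnG ε r := by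
  unfold kohnScale kohnG
  split_ifs with h1 h2
  · ring
  · have hr : r ≠ 0 := (lt_of_lt_of_le hε0 h2).ne'
    rw [div_mul_cancel₀ _ hr, ← add_div]
  · rw [mul_comm, div_eq_mul_inv]

lemma kohnScale_nonneg (ε r : ℝ) (hε0 : 0 < ε) (hε1 : ε < 1) : 0 ≤ kohnScale ε r := by
  have h2ε : (0:ℝ) < 2 - ε := by linarith
  unfold kohnScale
  split_ifs with h1 h2
  · norm_num
  · have hr : 0 < r := lt_of_lt_of_le hε0 h2
    apply div_nonneg _ hr.le
    apply add_nonneg (div_nonneg (by linarith) h2ε.le) (div_nonneg hr.le h2ε.le)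
  · positivity

lemma kohnScale_le (ε r : ℝ) (hε0 : 0 < ε) (hε1 : ε < 1) : kohnScale ε r ≤ 1 / ε := by
  have h2ε : (0:ℝ) < 2 - ε := by linarith
  unfold kohnScale
  split_ifs with h1 h2
  · rw [le_div_iff₀ hε0]; linarith
  · have hr : 0 < r := lt_of_lt_of_le hε0 h2
    rw [← add_div, div_div, div_le_div_iff₀ (by positivity) hε0]
    nlinarith [mul_nonneg (show (0:ℝ) ≤ 1 - ε by linarith) (show (0:ℝ) ≤ r - ε by linarith)]
  · rw [one_div]

lemma kohnG_mono (ε : ℝ) (hε0 : 0 < ε) (hε1 : ε < 1) {r s : ℝ} (hs : 0 ≤ s) (hsr : s ≤ r) :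
    kohnG ε s ≤ kohnG ε r := by
  have h2ε : (0:ℝ) < 2 - ε := by linarith
  unfold kohnG
  split_ifs with hs1 hr1 hr2 hs2 hr3 hr4 hr5 hr6
  · exact hsr
  · linarith
  · linarith
  · rw [div_le_iff₀ h2ε]; nlinarith
  · rw [div_le_div_iff₀ h2ε h2ε]; nlinarith
  · linarith
  · rw [div_le_iff₀ hε0]; nlinarith
  · rw [div_le_div_iff₀ hε0 h2ε]
    nlinarith [mul_nonneg hε0.le (show (0:ℝ) ≤ r - ε by linarith),
      mul_nonneg (show (0:ℝ) ≤ ε - s by linarith) h2ε.le]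
  · rw [div_le_div_iff₀ hε0 hε0]; nlinarith

lemma kohnG_sublip (ε : ℝ) (hε0 : 0 < ε) (hε1 : ε < 1) {r s : ℝ} (hs : 0 ≤ s) (hsr : s ≤ r) :
    kohnG ε r - kohnG ε s ≤ (r - s) / ε := by
  have h2ε : (0:ℝ) < 2 - ε := by linarith
  unfold kohnG
  split_ifs with hr1 hs1 hs2 hr2 hs3 hs4 hs5 hs6
  · rw [le_div_iff₀ hε0]; nlinarith
  · rw [← sub_nonneg]
    have key : (r - s)/ε - (r - (2 - 2*ε + s)/(2-ε))
        = ((r-s)*(2-ε) - ε*(r*(2-ε) - (2 - 2*ε + s))) / (ε*(2-ε)) := by field_simp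
    rw [key]
    apply div_nonneg _ (by positivity)
    nlinarith [mul_nonneg (show (0:ℝ) ≤ 1 - ε by linarith)
      (show (0:ℝ) ≤ r*(2-ε) - 2*s + 2*ε by nlinarith)]
  · rw [sub_div]
    apply sub_le_sub_right
    rw [le_div_iff₀ hε0]; nlinarith
  · linarith
  · rw [div_sub_div_same, div_le_div_iff₀ h2ε hε0]; nlinarith
  · rw [← sub_nonneg]
    have key : (r - s)/ε - ((2 - 2*ε + r)/(2-ε) - s/ε)
        = ((r-s)*(2-ε) - (ε*(2 - 2*ε + r) - s*(2-ε))) / (ε*(2-ε)) := by field_simp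
    rw [key]
    apply div_nonneg _ (by positivity)
    nlinarith [mul_nonneg (show (0:ℝ) ≤ 1 - ε by linarith)
      (show (0:ℝ) ≤ r - ε by linarith)]
  · linarith
  · linarith
  · rw [sub_div]

lemma kohnG_abs_lip (ε : ℝ) (hε0 : 0 < ε) (hε1 : ε < 1) {r s : ℝ} (hr : 0 ≤ r) (hs : 0 ≤ s) :
    |kohnG ε r - kohnG ε s| ≤ |r - s| / ε := by
  rcases le_total s r with h | h
  · rw [abs_of_nonneg (sub_nonneg.2 (kohnG_mono ε hε0 hε1 hs h)),
      abs_of_nonneg (sub_nonneg.2 h)]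
    exact kohnG_sublip ε hε0 hε1 hs h
  · rw [abs_sub_comm, abs_sub_comm r s,
      abs_of_nonneg (sub_nonneg.2 (kohnG_mono ε hε0 hε1 hr h)),
      abs_of_nonneg (sub_nonneg.2 h)]
    exact kohnG_sublip ε hε0 hε1 hr h

lemma kohnMap_eq (d : ℕ) (ε : ℝ) (hε0 : 0 < ε) (x : EuclideanSpace ℝ (Fin d)) :
    kohnMap d ε x = kohnScale ε ‖x‖ • x := by
  unfold kohnMap kohnScale
  split_ifs with h1 h2
  · rw [one_smul]
  · rw [smul_smul, ← div_eq_mul_inv]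
  · rfl

/-- `F_ε` is Lipschitz continuous on `ℝ^d` with Lipschitz constant `1/ε`. -/
theorem kohnMap_lipschitz (d : ℕ) (hd : 2 ≤ d) (ε : ℝ) (hε0 : 0 < ε) (hε1 : ε < 1) :
    LipschitzWith (Real.toNNReal (1 / ε)) (kohnMap d ε) := by
  have h2ε : (0:ℝ) < 2 - ε := by linarith
  apply LipschitzWith.of_dist_le_mul
  intro x y
  rw [dist_eq_norm, dist_eq_norm, Real.coe_toNNReal _ (by positivity : (0:ℝ) ≤ 1/ε),
    kohnMap_eq d ε hε0 x, kohnMap_eq d ε hε0 y]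
  set L : ℝ := 1 / ε with hLdef
  set c : ℝ := kohnScale ε ‖x‖ with hc
  set c' : ℝ := kohnScale ε ‖y‖ with hc'
  have hc0 : 0 ≤ c := kohnScale_nonneg ε ‖x‖ hε0 hε1
  have hc'0 : 0 ≤ c' := kohnScale_nonneg ε ‖y‖ hε0 hε1
  have hcL : c ≤ L := kohnScale_le ε ‖x‖ hε0 hε1
  have hc'L : c' ≤ L := kohnScale_le ε ‖y‖ hε0 hε1
  have hL0 : 0 < L := by positivity
  have hlip : |c * ‖x‖ - c' * ‖y‖| ≤ L * |‖x‖ - ‖y‖| := by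
    rw [kohnScale_mul ε ‖x‖ hε0, kohnScale_mul ε ‖y‖ hε0, hLdef, one_div, ← div_eq_inv_mul]
    exact kohnG_abs_lip ε hε0 hε1 (norm_nonneg x) (norm_nonneg y)
  have hlipsq : (c * ‖x‖ - c' * ‖y‖)^2 ≤ L^2 * (‖x‖ - ‖y‖)^2 := by
    have h := pow_le_pow_left₀ (abs_nonneg _) hlip 2
    rwa [sq_abs, mul_pow, sq_abs] at h
  have hp : ⟪x, y⟫ ≤ ‖x‖ * ‖y‖ := real_inner_le_norm x y
  have hcc : c * c' ≤ L^2 := by nlinarith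
  have expand : ‖c • x - c' • y‖^2
      = c^2 * ‖x‖^2 - 2 * (c * c') * ⟪x, y⟫ + c'^2 * ‖y‖^2 := by
    rw [norm_sub_sq_real, real_inner_smul_left, real_inner_smul_right,
      norm_smul, norm_smul]
    simp only [Real.norm_eq_abs]
    rw [mul_pow, mul_pow, sq_abs, sq_abs]
    ring
  have expand2 : ‖x - y‖^2 = ‖x‖^2 - 2 * ⟪x, y⟫ + ‖y‖^2 := norm_sub_sq_real x y
  have hsq : ‖c • x - c' • y‖^2 ≤ (L * ‖x - y‖)^2 := by
    rw [expand, mul_pow, expand2]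
    nlinarith [hlipsq, mul_nonneg (sub_nonneg.2 hcc) (sub_nonneg.2 hp)]
  calc ‖c • x - c' • y‖ = Real.sqrt (‖c • x - c' • y‖^2) :=
        (Real.sqrt_sq (norm_nonneg _)).symm
    _ ≤ Real.sqrt ((L * ‖x - y‖)^2) := Real.sqrt_le_sqrt hsq
    _ = L * ‖x - y‖ := Real.sqrt_sq (by positivity)
end

section
/- For every x ∈ ℝ^d with ε < |x| < 2, the map F_ε is (Fréchet) differentiable at x and the determinant of its derivative satisfies det(DF_ε(x)) = (1/(2-ε)) · ((2-2ε+|x|)/((2-ε)|x|))^{d-1}. In particular det(DF_ε(x)) ≥ 1/(2-ε) > 0 on this annulus. -/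
set_option synthInstance.maxHeartbeats 400000
set_option maxHeartbeats 1000000
set_option maxRecDepth 8000
open RealInnerProductSpace

lemma my_hasFDerivAt_norm {d : ℕ} (x : EuclideanSpace ℝ (Fin d)) (hx : x ≠ 0) :
    HasFDerivAt (fun y : EuclideanSpace ℝ (Fin d) => ‖y‖) ((‖x‖⁻¹ : ℝ) • (innerSL ℝ x)) x := by
  have h1 : HasFDerivAt (fun y : EuclideanSpace ℝ (Fin d) => ‖y‖ ^ 2)
      (2 • (innerSL ℝ x).comp (ContinuousLinearMap.id ℝ _)) x := (hasFDerivAt_id x).norm_sq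
  have hx2 : ‖x‖ ^ 2 ≠ 0 := pow_ne_zero 2 (norm_ne_zero_iff.2 hx)
  have h2 := h1.sqrt hx2
  have h3 : (fun y : EuclideanSpace ℝ (Fin d) => Real.sqrt (‖y‖ ^ 2)) = fun y => ‖y‖ := by
    funext y; rw [Real.sqrt_sq (norm_nonneg y)]
  rw [h3] at h2
  refine h2.congr_fderiv ?_; symm
  rw [Real.sqrt_sq (norm_nonneg x)]
  ext v
  simp [two_smul]
  have : ‖x‖ ≠ 0 := by simpa using hx
  field_simp
  ring

lemma my_hasFDerivAt_G {d : ℕ} (ε : ℝ) (x : EuclideanSpace ℝ (Fin d)) (hx : x ≠ 0) :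
    HasFDerivAt (fun y : EuclideanSpace ℝ (Fin d) =>
        ((2 - 2*ε)/(2-ε)) • (‖y‖⁻¹ • y) + (2-ε)⁻¹ • y)
      ((((2-ε)⁻¹ + (2 - 2*ε)/(2-ε) * ‖x‖⁻¹) • ContinuousLinearMap.id ℝ _)
        + (-((2 - 2*ε)/(2-ε)) * (‖x‖^3)⁻¹) • (innerSL ℝ x).smulRight x) x := by
  have hr : ‖x‖ ≠ 0 := norm_ne_zero_iff.2 hx
  have hninv : HasFDerivAt (fun y : EuclideanSpace ℝ (Fin d) => ‖y‖⁻¹)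
      ((-(‖x‖^2)⁻¹) • ((‖x‖⁻¹ : ℝ) • (innerSL ℝ x))) x :=
    (hasDerivAt_inv hr).comp_hasFDerivAt x (my_hasFDerivAt_norm x hx)
  have hs := hninv.smul (hasFDerivAt_id x)
  have h2 := (hs.const_smul ((2 - 2*ε)/(2-ε))).add ((hasFDerivAt_id x).const_smul ((2-ε)⁻¹ : ℝ))
  refine h2.congr_fderiv ?_; symm
  ext v
  simp [real_inner_smul_left]
  field_simp
  ring

lemma my_det_aux {d : ℕ} (hd : 2 ≤ d) (x : EuclideanSpace ℝ (Fin d)) (hx : x ≠ 0) (a c : ℝ) :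
    LinearMap.det ((a • ContinuousLinearMap.id ℝ (EuclideanSpace ℝ (Fin d))
        + c • (innerSL ℝ x).smulRight x : EuclideanSpace ℝ (Fin d) →L[ℝ] EuclideanSpace ℝ (Fin d)) :
      EuclideanSpace ℝ (Fin d) →ₗ[ℝ] EuclideanSpace ℝ (Fin d))
      = (a + c * ‖x‖^2) * a ^ (d-1) := by
  haveI : NeZero d := ⟨by omega⟩
  have hr : ‖x‖ ≠ 0 := norm_ne_zero_iff.2 hx
  set u : EuclideanSpace ℝ (Fin d) := ‖x‖⁻¹ • x with hu
  have hxu : x = ‖x‖ • u := by rw [hu, smul_smul, mul_inv_cancel₀ hr, one_smul]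
  have hcard : Module.finrank ℝ (EuclideanSpace ℝ (Fin d)) = Fintype.card (Fin d) := by simp
  have horth : Orthonormal ℝ (({0} : Set (Fin d)).restrict (fun _ => u)) := by
    constructor
    · intro i
      simp only [Set.restrict_apply, hu, norm_smul, norm_inv, norm_norm]
      change ‖(‖x‖⁻¹ • x)‖ = 1
      rw [norm_smul, norm_inv, norm_norm, inv_mul_cancel₀ hr]
    · intro i j hij
      exact absurd (Subtype.ext (i.2.trans j.2.symm)) hij
  obtain ⟨b, hb⟩ := horth.exists_orthonormalBasis_extension_of_card_eq hcard
  have hb0 : b 0 = u := hb 0 rfl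
  rw [← LinearMap.det_toMatrix b.toBasis]
  have hdiag : LinearMap.toMatrix b.toBasis b.toBasis
      ((a • ContinuousLinearMap.id ℝ (EuclideanSpace ℝ (Fin d))
        + c • (innerSL ℝ x).smulRight x : EuclideanSpace ℝ (Fin d) →L[ℝ] EuclideanSpace ℝ (Fin d)) :
      EuclideanSpace ℝ (Fin d) →ₗ[ℝ] EuclideanSpace ℝ (Fin d)) =
      Matrix.diagonal (fun j : Fin d => if j = 0 then a + c * ‖x‖^2 else a) := by
    ext i j
    rw [LinearMap.toMatrix_apply, OrthonormalBasis.coe_toBasis]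
    have happ : (((a • ContinuousLinearMap.id ℝ (EuclideanSpace ℝ (Fin d))
        + c • (innerSL ℝ x).smulRight x : EuclideanSpace ℝ (Fin d) →L[ℝ] EuclideanSpace ℝ (Fin d)) :
      EuclideanSpace ℝ (Fin d) →ₗ[ℝ] EuclideanSpace ℝ (Fin d))) (b j)
        = a • b j + (c * inner ℝ x (b j)) • x := by
      simp [smul_smul]
    rw [happ]
    rw [OrthonormalBasis.coe_toBasis_repr_apply, map_add, map_smul, map_smul]
    have h1 : b.repr (b j) i = if i = j then 1 else 0 := by
      rw [b.repr_apply_apply]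
      exact orthonormal_iff_ite.1 b.orthonormal i j
    have h2 : (inner ℝ x (b j) : ℝ) = ‖x‖ * (if j = 0 then 1 else 0) := by
      calc (inner ℝ x (b j) : ℝ) = inner ℝ (‖x‖ • b 0) (b j) := by rw [hb0, ← hxu]
      _ = ‖x‖ * inner ℝ (b 0) (b j) := real_inner_smul_left _ _ _
      _ = ‖x‖ * (if j = 0 then 1 else 0) := by
          rw [orthonormal_iff_ite.1 b.orthonormal 0 j]; simp [eq_comm]
    have h3 : b.repr x i = ‖x‖ * (if i = 0 then 1 else 0) := by
      calc b.repr x i = inner ℝ (b i) (‖x‖ • b 0) := by rw [b.repr_apply_apply, hb0, ← hxu]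
      _ = ‖x‖ * inner ℝ (b i) (b 0) := real_inner_smul_right _ _ _
      _ = _ := by rw [orthonormal_iff_ite.1 b.orthonormal i 0]
    simp only [map_add, map_smul, PiLp.add_apply, PiLp.smul_apply, smul_eq_mul, h1, h2, h3,
      Matrix.diagonal_apply]
    rcases eq_or_ne i j with rfl | hij
    · rcases eq_or_ne i 0 with rfl | hi0
      · norm_num; ring
      · simp only [if_pos rfl, if_neg hi0]; norm_num; try ring
    · rcases eq_or_ne j 0 with rfl | hj0
      · simp only [if_neg hij, if_pos rfl, if_neg hij]; norm_num
      · simp only [if_neg hij, if_neg hj0]; norm_num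
  rw [hdiag, Matrix.det_diagonal]
  rw [← Finset.mul_prod_erase Finset.univ _ (Finset.mem_univ 0)]
  rw [if_pos rfl]
  congr 1
  rw [Finset.prod_congr rfl (fun i hi => if_neg (Finset.ne_of_mem_erase hi)),
    Finset.prod_const, Finset.card_erase_of_mem (Finset.mem_univ 0), Finset.card_univ,
    Fintype.card_fin]

/-- For `ε < |x| < 2`, `F_ε` is Fréchet differentiable at `x` and the determinant of
its derivative equals `(1/(2-ε)) · ((2-2ε+|x|)/((2-ε)|x|))^(d-1)`; in particular it is
bounded below by `1/(2-ε) > 0`. -/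
theorem kohnMap_fderiv_det (d : ℕ) (hd : 2 ≤ d) (ε : ℝ) (hε0 : 0 < ε) (hε1 : ε < 1)
    (x : EuclideanSpace ℝ (Fin d)) (hx1 : ε < ‖x‖) (hx2 : ‖x‖ < 2) :
    DifferentiableAt ℝ (kohnMap d ε) x ∧
    LinearMap.det (fderiv ℝ (kohnMap d ε) x : EuclideanSpace ℝ (Fin d) →ₗ[ℝ] EuclideanSpace ℝ (Fin d)) =
      (1 / (2 - ε)) * ((2 - 2 * ε + ‖x‖) / ((2 - ε) * ‖x‖)) ^ (d - 1) ∧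
    1 / (2 - ε) ≤
      LinearMap.det (fderiv ℝ (kohnMap d ε) x : EuclideanSpace ℝ (Fin d) →ₗ[ℝ] EuclideanSpace ℝ (Fin d)) ∧
    0 < 1 / (2 - ε) := by
  have hr0 : (0:ℝ) < ‖x‖ := lt_trans hε0 hx1
  have hr : ‖x‖ ≠ 0 := ne_of_gt hr0
  have hx0 : x ≠ 0 := norm_ne_zero_iff.1 hr
  have h2ε : (2:ℝ) - ε ≠ 0 := by linarith
  have h2εpos : (0:ℝ) < 2 - ε := by linarith
  set G : EuclideanSpace ℝ (Fin d) → EuclideanSpace ℝ (Fin d) := fun y =>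
    ((2 - 2*ε)/(2-ε)) • (‖y‖⁻¹ • y) + (2-ε)⁻¹ • y with hG
  have hGd := my_hasFDerivAt_G ε x hx0
  have hmem : {y : EuclideanSpace ℝ (Fin d) | ε < ‖y‖ ∧ ‖y‖ < 2} ∈ nhds x := by
    have hop : IsOpen {y : EuclideanSpace ℝ (Fin d) | ε < ‖y‖ ∧ ‖y‖ < 2} := by
      rw [Set.setOf_and]
      exact (isOpen_lt continuous_const continuous_norm).inter
        (isOpen_lt continuous_norm continuous_const)
    exact hop.mem_nhds ⟨hx1, hx2⟩
  have heq : kohnMap d ε =ᶠ[nhds x] G := by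
    refine Filter.eventuallyEq_of_mem hmem (fun y hy => ?_)
    obtain ⟨hy1, hy2⟩ := hy
    have hyr : ‖y‖ ≠ 0 := ne_of_gt (lt_trans hε0 hy1)
    rw [kohnMap, if_neg (not_le.2 hy2), if_pos hy1.le, hG]
    simp only
    rw [add_smul]
    congr 1
    have hsc : ‖y‖/(2-ε) * ‖y‖⁻¹ = (2-ε)⁻¹ := by field_simp
    rw [smul_smul, hsc]
  have hF := hGd.congr_of_eventuallyEq heq
  have hfd := hF.fderiv
  have hdet := my_det_aux hd x hx0 ((2-ε)⁻¹ + (2 - 2*ε)/(2-ε) * ‖x‖⁻¹)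
    (-((2 - 2*ε)/(2-ε)) * (‖x‖^3)⁻¹)
  have hdet' : LinearMap.det (fderiv ℝ (kohnMap d ε) x :
      EuclideanSpace ℝ (Fin d) →ₗ[ℝ] EuclideanSpace ℝ (Fin d)) =
      (1 / (2 - ε)) * ((2 - 2 * ε + ‖x‖) / ((2 - ε) * ‖x‖)) ^ (d - 1) := by
    rw [hfd, hdet]
    have e1 : ((2-ε)⁻¹ + (2 - 2*ε)/(2-ε) * ‖x‖⁻¹) + (-((2 - 2*ε)/(2-ε)) * (‖x‖^3)⁻¹) * ‖x‖^2
        = 1 / (2 - ε) := by field_simp; ring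
    have e2 : ((2-ε)⁻¹ + (2 - 2*ε)/(2-ε) * ‖x‖⁻¹) = (2 - 2 * ε + ‖x‖) / ((2 - ε) * ‖x‖) := by
      field_simp; ring
    rw [e1, e2]
  have hlam : (1:ℝ) ≤ (2 - 2 * ε + ‖x‖) / ((2 - ε) * ‖x‖) := by
    rw [le_div_iff₀ (by positivity)]
    nlinarith
  have hpos : (0:ℝ) < 1 / (2 - ε) := by positivity
  refine ⟨hF.differentiableAt, hdet', ?_, hpos⟩
  rw [hdet']
  nth_rewrite 1 [← mul_one (1 / (2 - ε))]
  exact mul_le_mul_of_nonneg_left (one_le_pow₀ hlam) hpos.le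
end

section
/- Let F : ℝ^d → ℝ^d be a C² diffeomorphism with det DF(x) > 0 for every x, let A : ℝ^d → ℝ^{d×d} be a C¹ matrix field, and let u : ℝ^d → ℝ be C². Define v = u ∘ F⁻¹ and the push-forward conductivity B(y) = (DF(x) · A(x) · DF(x)ᵀ)/det DF(x) evaluated at x = F⁻¹(y). Then for every y ∈ ℝ^d: Σ_i ∂_i( Σ_j B_{ij} ∂_j v )(y) = (1/det DF(F⁻¹(y))) · Σ_i ∂_i( Σ_j A_{ij} ∂_j u )(F⁻¹(y)); that is, ∇·(F*A ∇(u∘F⁻¹)) = (∇·(A∇u)) ∘ F⁻¹ / (det DF ∘ F⁻¹). -/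
open Matrix

/-- Partial derivative in the `i`-th coordinate direction of `ℝ^d`. -/
noncomputable def pd (d : ℕ) (i : Fin d) (f : (Fin d → ℝ) → ℝ) (x : Fin d → ℝ) : ℝ :=
  fderiv ℝ f x (Pi.single i 1)

/-- Divergence-form operator `∇·(M∇g) = Σ_i ∂_i(Σ_j M_{ij} ∂_j g)`. -/
noncomputable def divForm (d : ℕ) (M : (Fin d → ℝ) → Matrix (Fin d) (Fin d) ℝ)
    (g : (Fin d → ℝ) → ℝ) (x : Fin d → ℝ) : ℝ :=
  ∑ i, pd d i (fun z => ∑ j, M z i j * pd d j g z) x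

/-- Jacobian matrix of a map `F : ℝ^d → ℝ^d` at `x`. -/
noncomputable def jacMat (d : ℕ) (F : (Fin d → ℝ) → (Fin d → ℝ)) (x : Fin d → ℝ) :
    Matrix (Fin d) (Fin d) ℝ :=
  LinearMap.toMatrix' ((fderiv ℝ F x : (Fin d → ℝ) →L[ℝ] (Fin d → ℝ)) :
    (Fin d → ℝ) →ₗ[ℝ] (Fin d → ℝ))

lemma cov_clm_apply_sum (d : ℕ) (L : (Fin d → ℝ) →L[ℝ] ℝ) (ξ : Fin d → ℝ) :
    L ξ = ∑ l, ξ l * L (Pi.single l 1) := by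
  have h : ξ = ∑ l, ξ l • (Pi.single l 1 : Fin d → ℝ) := by
    funext j
    simp [Pi.single_apply]
  calc L ξ = L (∑ l, ξ l • (Pi.single l 1 : Fin d → ℝ)) := by rw [← h]
  _ = ∑ l, ξ l * L (Pi.single l 1) := by rw [map_sum]; simp [smul_eq_mul]

lemma jacMat_apply (d : ℕ) (F : (Fin d → ℝ) → (Fin d → ℝ)) (x : Fin d → ℝ) (i j : Fin d) :
    jacMat d F x i j = fderiv ℝ F x (Pi.single j 1) i := by
  rw [jacMat, LinearMap.toMatrix'_apply]
  have h : (fun j' => if j' = j then (1:ℝ) else 0) = Pi.single j 1 := by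
    funext j'; simp [Pi.single_apply]
  rfl

lemma pd_sum (d : ℕ) {ι : Type*} (s : Finset ι) (f : ι → (Fin d → ℝ) → ℝ) (x : Fin d → ℝ)
    (i : Fin d) (h : ∀ k ∈ s, DifferentiableAt ℝ (f k) x) :
    pd d i (fun z => ∑ k ∈ s, f k z) x = ∑ k ∈ s, pd d i (f k) x := by
  unfold pd
  rw [fderiv_fun_sum h]
  simp

lemma pd_mul (d : ℕ) {f g : (Fin d → ℝ) → ℝ} {x : Fin d → ℝ} (i : Fin d)
    (hf : DifferentiableAt ℝ f x) (hg : DifferentiableAt ℝ g x) :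
    pd d i (fun z => f z * g z) x = pd d i f x * g x + f x * pd d i g x := by
  unfold pd
  rw [fderiv_fun_mul hf hg]
  simp [smul_eq_mul]
  ring

lemma pd_const (d : ℕ) (i : Fin d) (c : ℝ) (x : Fin d → ℝ) :
    pd d i (fun _ => c) x = 0 := by
  unfold pd
  simp

lemma pd_comp (d : ℕ) (u : (Fin d → ℝ) → ℝ) (G : (Fin d → ℝ) → (Fin d → ℝ)) (z : Fin d → ℝ)
    (j : Fin d) (hu : DifferentiableAt ℝ u (G z)) (hG : DifferentiableAt ℝ G z) :
    pd d j (fun z' => u (G z')) z = ∑ l, jacMat d G z l j * pd d l u (G z) := by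
  have h1 : fderiv ℝ (fun z' => u (G z')) z = (fderiv ℝ u (G z)).comp (fderiv ℝ G z) :=
    fderiv_comp z hu hG
  unfold pd
  rw [h1]
  simp only [ContinuousLinearMap.coe_comp', Function.comp_apply]
  rw [cov_clm_apply_sum]
  exact Finset.sum_congr rfl fun l _ => by rw [jacMat_apply]

noncomputable def cdet (d : ℕ) : ContinuousMultilinearMap ℝ (fun _ : Fin d => (Fin d → ℝ)) ℝ :=
  MultilinearMap.mkContinuous
    (Matrix.detRowAlternating : ((Fin d → ℝ) [⋀^Fin d]→ₗ[ℝ] ℝ)).toMultilinearMap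
    (Nat.factorial d) (by
      intro m
      have h0 : (Matrix.detRowAlternating : ((Fin d → ℝ) [⋀^Fin d]→ₗ[ℝ] ℝ)).toMultilinearMap m
          = Matrix.det (Matrix.of m) := rfl
      rw [h0, Matrix.det_apply']
      refine le_trans (norm_sum_le _ _) ?_
      have hb : ∀ σ : Equiv.Perm (Fin d),
          ‖(Equiv.Perm.sign σ : ℤ) * ∏ i, (Matrix.of m) (σ i) i‖ ≤ ∏ i, ‖m i‖ := by
        intro σ
        rw [norm_mul]
        have h1 : ‖((Equiv.Perm.sign σ : ℤ) : ℝ)‖ = 1 := by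
          rcases Int.units_eq_one_or (Equiv.Perm.sign σ) with h | h <;> simp [h]
        rw [h1, one_mul]
        calc ‖∏ i, (Matrix.of m) (σ i) i‖ ≤ ∏ i, ‖m (σ i)‖ := by
              rw [norm_prod]
              refine Finset.prod_le_prod (fun _ _ => norm_nonneg _) fun i _ => ?_
              exact norm_le_pi_norm (m (σ i)) i
        _ = ∏ i, ‖m i‖ := Equiv.prod_comp σ (fun i => ‖m i‖)
      calc ∑ σ : Equiv.Perm (Fin d), ‖(Equiv.Perm.sign σ : ℤ) * ∏ i, (Matrix.of m) (σ i) i‖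
          ≤ ∑ _σ : Equiv.Perm (Fin d), ∏ i, ‖m i‖ :=
            Finset.sum_le_sum fun σ _ => hb σ
      _ = (Nat.factorial d) * ∏ i, ‖m i‖ := by
            rw [Finset.sum_const, Finset.card_univ, nsmul_eq_mul]
            congr 1
            simp [Fintype.card_perm])

lemma cdet_apply (d : ℕ) (m : Fin d → (Fin d → ℝ)) : cdet d m = Matrix.det (Matrix.of m) := rfl

lemma pd_det (d : ℕ) (M : (Fin d → ℝ) → Matrix (Fin d) (Fin d) ℝ) (x : Fin d → ℝ) (i : Fin d)
    (h : ∀ l j, DifferentiableAt ℝ (fun z => M z l j) x) :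
    pd d i (fun z => (M z).det) x
      = ∑ l, ((M x).updateRow l (fun j => pd d i (fun z => M z l j) x)).det := by
  have hrow : ∀ l, HasFDerivAt (fun z => M z l)
      (ContinuousLinearMap.pi (fun j => fderiv ℝ (fun z => M z l j) x)) x :=
    fun l => hasFDerivAt_pi.2 fun j => (h l j).hasFDerivAt
  have h2 : HasFDerivAt (fun z => cdet d (fun l => M z l))
      (((cdet d).linearDeriv (fun l => M x l)).comp
        (ContinuousLinearMap.pi (fun l =>
          ContinuousLinearMap.pi (fun j => fderiv ℝ (fun z => M z l j) x)))) x :=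
    ((cdet d).hasFDerivAt _).comp x (hasFDerivAt_pi.2 hrow)
  have h3 : pd d i (fun z => (M z).det) x = ((cdet d).linearDeriv (fun l => M x l))
      (fun l => fun j => pd d i (fun z => M z l j) x) := by
    unfold pd
    rw [show (fun z => (M z).det) = (fun z => cdet d (fun l => M z l)) from rfl, h2.fderiv]
    rfl
  rw [h3, ContinuousMultilinearMap.linearDeriv_apply]
  exact Finset.sum_congr rfl fun l _ => rfl

lemma cov_contDiff_prod (d : ℕ) {ι : Type*} [DecidableEq ι] (s : Finset ι)
    (f : ι → (Fin d → ℝ) → ℝ) (h : ∀ k ∈ s, ContDiff ℝ 1 (f k)) :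
    ContDiff ℝ 1 (fun z => ∏ k ∈ s, f k z) := by
  induction s using Finset.induction_on with
  | empty => simpa using contDiff_const
  | @insert a s ha ih =>
      simp only [Finset.prod_insert ha]
      exact (h a (Finset.mem_insert_self a s)).mul
        (ih fun k hk => h k (Finset.mem_insert_of_mem hk))

lemma contDiff_jacMat_entry (d : ℕ) {G : (Fin d → ℝ) → (Fin d → ℝ)} (hG : ContDiff ℝ 2 G)
    (l j : Fin d) : ContDiff ℝ 1 (fun z => jacMat d G z l j) := by
  have h1 : ContDiff ℝ 1 (fderiv ℝ G) := hG.fderiv_right (by norm_num)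
  have h2 : ContDiff ℝ 1 ((fun v : Fin d → ℝ => v l) ∘
      ((fun L : (Fin d → ℝ) →L[ℝ] (Fin d → ℝ) => L (Pi.single j 1)) ∘ fderiv ℝ G)) :=
    (ContinuousLinearMap.proj (R := ℝ) (φ := fun _ : Fin d => ℝ) l).contDiff.comp
      ((ContinuousLinearMap.apply ℝ (Fin d → ℝ) (Pi.single j 1)).contDiff.comp h1)
  have h3 : (fun z => jacMat d G z l j) = ((fun v : Fin d → ℝ => v l) ∘
      ((fun L : (Fin d → ℝ) →L[ℝ] (Fin d → ℝ) => L (Pi.single j 1)) ∘ fderiv ℝ G)) := by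
    funext z; simp [jacMat_apply, Function.comp]
  rw [h3]; exact h2

lemma contDiff_pd (d : ℕ) {u : (Fin d → ℝ) → ℝ} (hu : ContDiff ℝ 2 u) (m : Fin d) :
    ContDiff ℝ 1 (fun x => pd d m u x) := by
  have h1 : ContDiff ℝ 1 (fderiv ℝ u) := hu.fderiv_right (by norm_num)
  have h2 : ContDiff ℝ 1 ((fun L : (Fin d → ℝ) →L[ℝ] ℝ => L (Pi.single m 1)) ∘ fderiv ℝ u) :=
    (ContinuousLinearMap.apply ℝ ℝ (Pi.single m 1)).contDiff.comp h1
  exact h2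

lemma contDiff_adj_entry (d : ℕ) {G : (Fin d → ℝ) → (Fin d → ℝ)} (hG : ContDiff ℝ 2 G)
    (i k : Fin d) : ContDiff ℝ 1 (fun z => (jacMat d G z).adjugate i k) := by
  have h0 : (fun z => (jacMat d G z).adjugate i k)
      = fun z => ∑ σ : Equiv.Perm (Fin d), ((Equiv.Perm.sign σ : ℤ) : ℝ) *
          ∏ l, ((jacMat d G z).updateRow k (Pi.single i 1)) (σ l) l := by
    funext z; rw [Matrix.adjugate_apply, Matrix.det_apply']
  rw [h0]
  refine ContDiff.sum fun σ _ => ContDiff.mul contDiff_const ?_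
  refine cov_contDiff_prod d _ _ fun l _ => ?_
  by_cases h : σ l = k
  · have : (fun z => ((jacMat d G z).updateRow k (Pi.single i 1)) (σ l) l)
        = fun _ => (Pi.single i 1 : Fin d → ℝ) l := by
      funext z; rw [h, Matrix.updateRow_self]
    rw [this]; exact contDiff_const
  · have : (fun z => ((jacMat d G z).updateRow k (Pi.single i 1)) (σ l) l)
        = fun z => jacMat d G z (σ l) l := by
      funext z; rw [Matrix.updateRow_ne h]
    rw [this]; exact contDiff_jacMat_entry d hG (σ l) l

lemma det_updateRow_lin (d : ℕ) (Q : Matrix (Fin d) (Fin d) ℝ) (l : Fin d) (w : Fin d → ℝ)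
    (v : Fin d → (Fin d → ℝ)) :
    (Q.updateRow l (∑ j, w j • v j)).det = ∑ j, w j * (Q.updateRow l (v j)).det := by
  classical
  have key : ∀ s : Finset (Fin d),
      (Q.updateRow l (∑ j ∈ s, w j • v j)).det = ∑ j ∈ s, w j * (Q.updateRow l (v j)).det := by
    intro s
    induction s using Finset.induction_on with
    | empty =>
        simp only [Finset.sum_empty]
        have : (Q.updateRow l (0 : Fin d → ℝ)).det = 0 := by
          have h0 : (0 : Fin d → ℝ) = (0:ℝ) • (0 : Fin d → ℝ) := by simp
          rw [h0, Matrix.det_updateRow_smul]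
          simp
        exact this
    | @insert a s ha ih =>
        rw [Finset.sum_insert ha, Matrix.det_updateRow_add, Matrix.det_updateRow_smul, ih,
          Finset.sum_insert ha]
  exact key Finset.univ

lemma cov_sym_antisym (d : ℕ) (S T : Fin d → Fin d → ℝ) (hS : ∀ i j, S i j = S j i)
    (hT : ∀ i j, T j i = -T i j) : ∑ i, ∑ j, S i j * T i j = 0 := by
  have h1 : (∑ i, ∑ j, S i j * T i j) = ∑ j, ∑ i, S i j * T i j := Finset.sum_comm
  have h2 : (∑ j : Fin d, ∑ i : Fin d, S i j * T i j)
      = ∑ i, ∑ j, (-(S i j * T i j)) := by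
    refine Finset.sum_congr rfl fun i _ => Finset.sum_congr rfl fun j _ => ?_
    rw [hS j i, hT i j]; ring
  have h3 : (∑ i, ∑ j, S i j * T i j) = -(∑ i, ∑ j, S i j * T i j) := by
    have h4 : ∀ i : Fin d, (∑ j, -(S i j * T i j)) = -(∑ j, S i j * T i j) :=
      fun i => Finset.sum_neg_distrib _
    calc (∑ i, ∑ j, S i j * T i j) = ∑ i, ∑ j, -(S i j * T i j) := h1.trans h2
    _ = -(∑ i, ∑ j, S i j * T i j) := by
        rw [Finset.sum_congr rfl (fun i _ => h4 i), Finset.sum_neg_distrib]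
  linarith

lemma cov_pd_jac (d : ℕ) {G : (Fin d → ℝ) → (Fin d → ℝ)} (hG : ContDiff ℝ 2 G)
    (y : Fin d → ℝ) (l i j : Fin d) :
    pd d i (fun z => jacMat d G z l j) y
      = fderiv ℝ (fderiv ℝ G) y (Pi.single i 1) (Pi.single j 1) l := by
  have h1 : ContDiff ℝ 1 (fderiv ℝ G) := hG.fderiv_right (by norm_num)
  set ev : ((Fin d → ℝ) →L[ℝ] (Fin d → ℝ)) →L[ℝ] ℝ :=
    (ContinuousLinearMap.proj (R := ℝ) (φ := fun _ : Fin d => ℝ) l).comp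
      (ContinuousLinearMap.apply ℝ (Fin d → ℝ) (Pi.single j 1)) with hev
  have h4 : HasFDerivAt (fun z => ev (fderiv ℝ G z))
      (ev.comp (fderiv ℝ (fderiv ℝ G) y)) y :=
    ev.hasFDerivAt.comp y (h1.differentiable (by norm_num) y).hasFDerivAt
  have h5 : (fun z => jacMat d G z l j) = fun z => ev (fderiv ℝ G z) := by
    funext z; simp [jacMat_apply, hev]
  unfold pd
  rw [h5, h4.fderiv]
  rfl

lemma cov_second_symm (d : ℕ) {G : (Fin d → ℝ) → (Fin d → ℝ)} (hG : ContDiff ℝ 2 G)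
    (y : Fin d → ℝ) (v w : Fin d → ℝ) :
    fderiv ℝ (fderiv ℝ G) y v w = fderiv ℝ (fderiv ℝ G) y w v := by
  have h1 : ContDiff ℝ 1 (fderiv ℝ G) := hG.fderiv_right (by norm_num)
  exact second_derivative_symmetric
    (fun a => ((hG.differentiable (by norm_num)) a).hasFDerivAt)
    ((h1.differentiable (by norm_num) y).hasFDerivAt) v w

lemma cov_swap_det (d : ℕ) (Q : Matrix (Fin d) (Fin d) ℝ) {k l : Fin d} (hkl : l ≠ k)
    (a b : Fin d → ℝ) :
    ((Q.updateRow k a).updateRow l b).det = -((Q.updateRow k b).updateRow l a).det := by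
  have hP : ∀ (c e : Fin d → ℝ) (m j : Fin d), ((Q.updateRow k c).updateRow l e) m j
      = if m = l then e j else if m = k then c j else Q m j := by
    intro c e m j
    rcases eq_or_ne m l with rfl | h1
    · rw [Matrix.updateRow_self, if_pos rfl]
    · rw [Matrix.updateRow_ne h1, if_neg h1]
      rcases eq_or_ne m k with rfl | h2
      · rw [Matrix.updateRow_self, if_pos rfl]
      · rw [Matrix.updateRow_ne h2, if_neg h2]
  have h1 : (((Q.updateRow k a).updateRow l b).submatrix (Equiv.swap k l) id)
      = (Q.updateRow k b).updateRow l a := by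
    ext m j
    rw [Matrix.submatrix_apply, id_eq, hP a b _ j, hP b a m j]
    rcases eq_or_ne m k with rfl | hmk
    · simp [Equiv.swap_apply_left, Ne.symm hkl]
    · rcases eq_or_ne m l with rfl | hml
      · simp [Equiv.swap_apply_right, Ne.symm hkl]
      · simp [Equiv.swap_apply_of_ne_of_ne hmk hml, hml, hmk]
  have h2 := Matrix.det_permute (Equiv.swap k l) ((Q.updateRow k a).updateRow l b)
  rw [h1, Equiv.Perm.sign_swap (Ne.symm hkl)] at h2
  simp only [Units.val_neg, Units.val_one, Int.cast_neg, Int.cast_one, neg_mul, one_mul,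
    Int.reduceNeg] at h2
  linarith

lemma piola (d : ℕ) {G : (Fin d → ℝ) → (Fin d → ℝ)} (hG : ContDiff ℝ 2 G)
    (y : Fin d → ℝ) (k : Fin d) :
    ∑ i, pd d i (fun z => (jacMat d G z).adjugate i k) y = 0 := by
  classical
  set Q : Matrix (Fin d) (Fin d) ℝ := jacMat d G y with hQ
  set H : Fin d → Fin d → Fin d → ℝ :=
    fun l i j => fderiv ℝ (fderiv ℝ G) y (Pi.single i 1) (Pi.single j 1) l with hH
  set T : Fin d → Fin d → Fin d → ℝ :=
    fun l i j => ((Q.updateRow k (Pi.single i 1)).updateRow l (Pi.single j 1)).det with hT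
  -- entry functions of the updated matrix
  have hMent : ∀ (i l j : Fin d), (fun z => ((jacMat d G z).updateRow k (Pi.single i 1)) l j)
      = (if l = k then (fun _ => (Pi.single i 1 : Fin d → ℝ) j)
          else fun z => jacMat d G z l j) := by
    intro i l j
    rcases eq_or_ne l k with rfl | h
    · rw [if_pos rfl]; funext z; rw [Matrix.updateRow_self]
    · rw [if_neg h]; funext z; rw [Matrix.updateRow_ne h]
  have hdiff : ∀ (i l j : Fin d),
      DifferentiableAt ℝ (fun z => ((jacMat d G z).updateRow k (Pi.single i 1)) l j) y := by
    intro i l j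
    rw [hMent i l j]
    split_ifs
    · exact differentiableAt_const _
    · exact ((contDiff_jacMat_entry d hG l j).differentiable (by norm_num)) y
  have hpdent : ∀ (i l j : Fin d),
      pd d i (fun z => ((jacMat d G z).updateRow k (Pi.single i 1)) l j) y
        = if l = k then 0 else H l i j := by
    intro i l j
    rw [hMent i l j]
    rcases eq_or_ne l k with rfl | h
    · rw [if_pos rfl, if_pos rfl, pd_const]
    · rw [if_neg h, if_neg h, cov_pd_jac d hG y l i j]
  -- expand each summand via pd_det
  have hexp : ∀ i : Fin d, pd d i (fun z => (jacMat d G z).adjugate i k) y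
      = ∑ l, (if l = k then 0 else ∑ j, H l i j * T l i j) := by
    intro i
    have h0 : (fun z => (jacMat d G z).adjugate i k)
        = fun z => ((jacMat d G z).updateRow k (Pi.single i 1)).det := by
      funext z; rw [Matrix.adjugate_apply]
    rw [h0, pd_det d (fun z => (jacMat d G z).updateRow k (Pi.single i 1)) y i (hdiff i)]
    refine Finset.sum_congr rfl fun l _ => ?_
    by_cases h : l = k
    · rw [if_pos h]
      have hz : (fun j => pd d i
          (fun z => ((jacMat d G z).updateRow k (Pi.single i 1)) l j) y) = (0 : Fin d → ℝ) := by
        funext j; rw [hpdent i l j, if_pos h]; rfl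
      rw [hz]
      have h0' : (0 : Fin d → ℝ) = (0:ℝ) • (0 : Fin d → ℝ) := by simp
      rw [h0', Matrix.det_updateRow_smul]
      simp
    · rw [if_neg h]
      have hv : (fun j => pd d i
          (fun z => ((jacMat d G z).updateRow k (Pi.single i 1)) l j) y)
          = ∑ j, (H l i j) • (Pi.single j 1 : Fin d → ℝ) := by
        funext j'
        rw [Finset.sum_apply]
        have hterm : ∀ j, (H l i j • (Pi.single j 1 : Fin d → ℝ)) j'
            = if j' = j then H l i j else 0 := by
          intro j; simp [Pi.single_apply]
        simp only [hterm]
        rw [Finset.sum_ite_eq Finset.univ j' (fun j => H l i j)]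
        simp [hpdent i l j', if_neg h]
      have hbase : (jacMat d G y).updateRow k (Pi.single i 1)
          = Q.updateRow k (Pi.single i 1) := rfl
      rw [hv, hbase, det_updateRow_lin]
  rw [Finset.sum_congr rfl fun i _ => hexp i]
  rw [Finset.sum_comm]
  refine Finset.sum_eq_zero fun l _ => ?_
  rcases eq_or_ne l k with rfl | h
  · simp
  · simp only [if_neg h]
    exact cov_sym_antisym d (fun i j => H l i j) (fun i j => T l i j)
      (fun i j => by
        have := cov_second_symm d hG y (Pi.single i 1) (Pi.single j 1)
        exact congrFun this l)
      (fun i j => cov_swap_det d Q h (Pi.single j 1) (Pi.single i 1))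

lemma cov_jac_comp (d : ℕ) {φ ψ : (Fin d → ℝ) → (Fin d → ℝ)}
    (hφ : Differentiable ℝ φ) (hψ : Differentiable ℝ ψ) (x : Fin d → ℝ)
    (h : ∀ a, φ (ψ a) = a) : jacMat d φ (ψ x) * jacMat d ψ x = 1 := by
  have e1 : (fun a => φ (ψ a)) = id := funext h
  have e2 : fderiv ℝ (fun a => φ (ψ a)) x = (fderiv ℝ φ (ψ x)).comp (fderiv ℝ ψ x) :=
    fderiv_comp x (hφ _) (hψ _)
  rw [e1, fderiv_id] at e2
  have e3 : ((fderiv ℝ φ (ψ x) : (Fin d → ℝ) →L[ℝ] (Fin d → ℝ)) :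
        (Fin d → ℝ) →ₗ[ℝ] (Fin d → ℝ)).comp
      ((fderiv ℝ ψ x : (Fin d → ℝ) →L[ℝ] (Fin d → ℝ)) : (Fin d → ℝ) →ₗ[ℝ] (Fin d → ℝ))
      = LinearMap.id := by
    exact (congrArg (fun L : (Fin d → ℝ) →L[ℝ] (Fin d → ℝ) =>
      (L : (Fin d → ℝ) →ₗ[ℝ] (Fin d → ℝ))) e2).symm
  unfold jacMat
  rw [← LinearMap.toMatrix'_comp, e3, LinearMap.toMatrix'_id]

lemma cov_adj (d : ℕ) (Q P : Matrix (Fin d) (Fin d) ℝ) (h1 : P * Q = 1) (h2 : Q * P = 1) :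
    Q.adjugate = Q.det • P := by
  calc Q.adjugate = 1 * Q.adjugate := (Matrix.one_mul _).symm
  _ = (P * Q) * Q.adjugate := by rw [h1]
  _ = P * (Q * Q.adjugate) := by rw [Matrix.mul_assoc]
  _ = P * (Q.det • 1) := by rw [Matrix.mul_adjugate]
  _ = Q.det • P := by rw [Matrix.mul_smul, Matrix.mul_one]

noncomputable def covW (d : ℕ) (A : (Fin d → ℝ) → Matrix (Fin d) (Fin d) ℝ)
    (u : (Fin d → ℝ) → ℝ) : Fin d → (Fin d → ℝ) → ℝ :=
  fun k x => ∑ m, A x k m * pd d m u x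



/-- Change-of-variables principle for divergence-form operators: with `v = u∘F⁻¹` and the
push-forward conductivity `B = (DF·A·DFᵀ/det DF) ∘ F⁻¹`, one has
`∇·(B∇v) = (∇·(A∇u)) ∘ F⁻¹ / (det DF ∘ F⁻¹)`. -/
theorem change_of_variables_divForm (d : ℕ)
    (F G : (Fin d → ℝ) → (Fin d → ℝ))
    (hF : ContDiff ℝ 2 F) (hG : ContDiff ℝ 2 G)
    (hGF : Function.LeftInverse G F) (hFG : Function.RightInverse G F)
    (hdet : ∀ x, 0 < (jacMat d F x).det)
    (A : (Fin d → ℝ) → Matrix (Fin d) (Fin d) ℝ)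
    (hA : ∀ i j, ContDiff ℝ 1 (fun x => A x i j))
    (u : (Fin d → ℝ) → ℝ) (hu : ContDiff ℝ 2 u)
    (B : (Fin d → ℝ) → Matrix (Fin d) (Fin d) ℝ)
    (hB : ∀ y, B y = ((jacMat d F (G y)).det)⁻¹ •
      (jacMat d F (G y) * A (G y) * (jacMat d F (G y))ᵀ)) :
    ∀ y, divForm d B (fun z => u (G z)) y =
      ((jacMat d F (G y)).det)⁻¹ * divForm d A u (G y) := by
  classical
  intro y
  have hFd : Differentiable ℝ F := hF.differentiable (by norm_num)
  have hGd : Differentiable ℝ G := hG.differentiable (by norm_num)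
  have hud : Differentiable ℝ u := hu.differentiable (by norm_num)
  have hwC : ∀ k, ContDiff ℝ 1 (covW d A u k) :=
    fun k => ContDiff.sum fun m _ => (hA k m).mul (contDiff_pd d hu m)
  have hwG : ∀ k, DifferentiableAt ℝ (fun z => covW d A u k (G z)) y :=
    fun k => (((hwC k).comp (hG.of_le (by norm_num))).differentiable (by norm_num)) y
  have hQP : ∀ z, jacMat d G z * jacMat d F (G z) = 1 := by
    intro z
    have h0 := cov_jac_comp d hGd hFd (G z) hGF
    rwa [hFG z] at h0
  have hPQ : ∀ z, jacMat d F (G z) * jacMat d G z = 1 :=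
    fun z => cov_jac_comp d hFd hGd z hFG
  have hdetQ : ∀ z, (jacMat d G z).det = ((jacMat d F (G z)).det)⁻¹ := by
    intro z
    have h0 := congrArg Matrix.det (hQP z)
    rw [Matrix.det_mul, Matrix.det_one] at h0
    exact eq_inv_of_mul_eq_one_left h0
  have hadjQ : ∀ z, (jacMat d G z).adjugate = (jacMat d G z).det • jacMat d F (G z) :=
    fun z => cov_adj d _ _ (hPQ z) (hQP z)
  have hadjD : ∀ i k', DifferentiableAt ℝ (fun z => (jacMat d G z).adjugate i k') y :=
    fun i k' => ((contDiff_adj_entry d hG i k').differentiable (by norm_num)) y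
  -- Step 1
  have hstep1 : ∀ i : Fin d, (fun z => ∑ j, B z i j * pd d j (fun z' => u (G z')) z)
      = fun z => ∑ k', (jacMat d G z).adjugate i k' * covW d A u k' (G z) := by
    intro i; funext z
    have hch : ∀ j, pd d j (fun z' => u (G z')) z = ∑ l, jacMat d G z l j * pd d l u (G z) :=
      fun j => pd_comp d u G z j (hud _) (hGd _)
    have hkey : B z * (jacMat d G z)ᵀ = (jacMat d G z).adjugate * A (G z) := by
      rw [hB z, hadjQ z, hdetQ z]
      calc ((jacMat d F (G z)).det)⁻¹ • (jacMat d F (G z) * A (G z) * (jacMat d F (G z))ᵀ)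
            * (jacMat d G z)ᵀ
          = ((jacMat d F (G z)).det)⁻¹ • (jacMat d F (G z) * A (G z) *
              ((jacMat d F (G z))ᵀ * (jacMat d G z)ᵀ)) := by
            rw [Matrix.smul_mul, Matrix.mul_assoc]
      _ = ((jacMat d F (G z)).det)⁻¹ • (jacMat d F (G z) * A (G z)) := by
            rw [← Matrix.transpose_mul, hQP z, Matrix.transpose_one, Matrix.mul_one]
      _ = (((jacMat d F (G z)).det)⁻¹ • jacMat d F (G z)) * A (G z) := by
            rw [Matrix.smul_mul]
    calc ∑ j, B z i j * pd d j (fun z' => u (G z')) z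
        = ∑ j, ∑ l, B z i j * (jacMat d G z l j * pd d l u (G z)) := by
          refine Finset.sum_congr rfl fun j _ => ?_
          rw [hch j, Finset.mul_sum]
    _ = ∑ l, (∑ j, B z i j * jacMat d G z l j) * pd d l u (G z) := by
          rw [Finset.sum_comm]
          refine Finset.sum_congr rfl fun l _ => ?_
          rw [Finset.sum_mul]
          exact Finset.sum_congr rfl fun j _ => by ring
    _ = ∑ l, (B z * (jacMat d G z)ᵀ) i l * pd d l u (G z) := by
          refine Finset.sum_congr rfl fun l _ => ?_
          rw [Matrix.mul_apply]
          congr 1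
    _ = ∑ l, ((jacMat d G z).adjugate * A (G z)) i l * pd d l u (G z) := by rw [hkey]
    _ = ∑ l, ∑ k', (jacMat d G z).adjugate i k' * (A (G z) k' l * pd d l u (G z)) := by
          refine Finset.sum_congr rfl fun l _ => ?_
          rw [Matrix.mul_apply, Finset.sum_mul]
          exact Finset.sum_congr rfl fun k' _ => by ring
    _ = ∑ k', (jacMat d G z).adjugate i k' * covW d A u k' (G z) := by
          rw [Finset.sum_comm]
          refine Finset.sum_congr rfl fun k' _ => ?_
          rw [covW, Finset.mul_sum]
  -- Step 2
  have hstep2 : divForm d B (fun z => u (G z)) y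
      = ∑ i, ∑ k', (pd d i (fun z => (jacMat d G z).adjugate i k') y * covW d A u k' (G y)
          + (jacMat d G y).adjugate i k' * pd d i (fun z => covW d A u k' (G z)) y) := by
    unfold divForm
    refine Finset.sum_congr rfl fun i _ => ?_
    rw [hstep1 i]
    rw [pd_sum d Finset.univ (fun k' z => (jacMat d G z).adjugate i k' * covW d A u k' (G z))
      y i (fun k' _ => (hadjD i k').mul (hwG k'))]
    exact Finset.sum_congr rfl fun k' _ => pd_mul d i (hadjD i k') (hwG k')
  rw [hstep2]
  have hsplit : (∑ i, ∑ k' : Fin d,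
      (pd d i (fun z => (jacMat d G z).adjugate i k') y * covW d A u k' (G y)
        + (jacMat d G y).adjugate i k' * pd d i (fun z => covW d A u k' (G z)) y))
      = (∑ k' : Fin d, (∑ i, pd d i (fun z => (jacMat d G z).adjugate i k') y)
          * covW d A u k' (G y))
        + ∑ i, ∑ k', (jacMat d G y).adjugate i k'
            * pd d i (fun z => covW d A u k' (G z)) y := by
    rw [Finset.sum_congr rfl fun i (_ : i ∈ Finset.univ) => Finset.sum_add_distrib,
      Finset.sum_add_distrib]
    congr 1
    rw [Finset.sum_comm]
    exact Finset.sum_congr rfl fun k' _ => by rw [Finset.sum_mul]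
  rw [hsplit]
  have hfirst : (∑ k' : Fin d, (∑ i, pd d i (fun z => (jacMat d G z).adjugate i k') y)
      * covW d A u k' (G y)) = 0 := by
    refine Finset.sum_eq_zero fun k' _ => ?_
    rw [piola d hG y k', zero_mul]
  rw [hfirst, zero_add]
  -- second sum
  have hch2 : ∀ i k', pd d i (fun z => covW d A u k' (G z)) y
      = ∑ l, jacMat d G y l i * pd d l (covW d A u k') (G y) :=
    fun i k' => pd_comp d (covW d A u k') G y i (((hwC k').differentiable (by norm_num)) _) (hGd y)
  calc (∑ i, ∑ k', (jacMat d G y).adjugate i k' * pd d i (fun z => covW d A u k' (G z)) y)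
      = ∑ i, ∑ k', ∑ l, jacMat d G y l i * (jacMat d G y).adjugate i k'
          * pd d l (covW d A u k') (G y) := by
        refine Finset.sum_congr rfl fun i _ => Finset.sum_congr rfl fun k' _ => ?_
        rw [hch2 i k', Finset.mul_sum]
        exact Finset.sum_congr rfl fun l _ => by ring
  _ = ∑ k', ∑ l, (∑ i, jacMat d G y l i * (jacMat d G y).adjugate i k')
        * pd d l (covW d A u k') (G y) := by
        rw [Finset.sum_comm]
        refine Finset.sum_congr rfl fun k' _ => ?_
        rw [Finset.sum_comm]
        refine Finset.sum_congr rfl fun l _ => ?_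
        rw [Finset.sum_mul]
  _ = ∑ k', ∑ l, (if l = k' then (jacMat d G y).det else 0) * pd d l (covW d A u k') (G y) := by
        refine Finset.sum_congr rfl fun k' _ => Finset.sum_congr rfl fun l _ => ?_
        congr 1
        have h0 : (∑ i, jacMat d G y l i * (jacMat d G y).adjugate i k')
            = (jacMat d G y * (jacMat d G y).adjugate) l k' := by rw [Matrix.mul_apply]
        rw [h0, Matrix.mul_adjugate, Matrix.smul_apply, Matrix.one_apply]
        split_ifs <;> simp
  _ = ∑ k', (jacMat d G y).det * pd d k' (covW d A u k') (G y) := by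
        refine Finset.sum_congr rfl fun k' _ => ?_
        rw [Finset.sum_congr rfl fun l (_ : l ∈ Finset.univ) => ite_mul _ _ _ _]
        simp only [zero_mul]
        exact Finset.sum_ite_eq' Finset.univ k'
          (fun l => (jacMat d G y).det * pd d l (covW d A u k') (G y)) |>.trans (by simp)
  _ = ((jacMat d F (G y)).det)⁻¹ * divForm d A u (G y) := by
        rw [← Finset.mul_sum, hdetQ y]
        rfl
end
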